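/- Let f, ψ ∈ L²(𝕋, m) with ψ real-valued nonnegative. Suppose that for every measurable τ ⊂ 𝕋 and every a, b > 0 one has ∫_𝕋 |φ|²|f|² dm ≤ M² ∫_𝕋 |φ|²ψ² dm for all φ ∈ H^∞ (where M > 0 is fixed). Then |f| ≤ M ψ a.e. on 𝕋. -/

import Mathlib

open MeasureTheory Filter Topology

/-- Splitting an integral against `‖φ‖²` when `‖φ‖ = 1` a.e. on `E` and `= b` a.e. off `E`. -/
lemma split_integral_aux {Ω : Type*} [MeasurableSpace Ω] (μ : Measure Ω)
    (E : Set Ω) (hEm : MeasurableSet E) (b : ℝ) (φ : Ω → ℂ)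
    (hφ1 : ∀ᵐ ζ ∂μ, ζ ∈ E → ‖φ ζ‖ = 1)
    (hφ2 : ∀ᵐ ζ ∂μ, ζ ∉ E → ‖φ ζ‖ = b)
    (g : Ω → ℝ) (hg : Integrable g μ) :
    ∫ ζ, ‖φ ζ‖ ^ 2 * g ζ ∂μ
      = (∫ ζ in E, g ζ ∂μ) + b ^ 2 * ∫ ζ in Eᶜ, g ζ ∂μ := by
  have hae : (fun ζ => ‖φ ζ‖ ^ 2 * g ζ)
      =ᵐ[μ] fun ζ => E.indicator g ζ + Eᶜ.indicator (fun ζ => b ^ 2 * g ζ) ζ := by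
    filter_upwards [hφ1, hφ2] with ζ h1 h2
    by_cases hζ : ζ ∈ E
    · rw [Set.indicator_of_mem hζ, Set.indicator_of_notMem (Set.notMem_compl_iff.2 hζ),
        h1 hζ]
      ring
    · rw [Set.indicator_of_notMem hζ, Set.indicator_of_mem (Set.mem_compl hζ), h2 hζ,
        zero_add]
  rw [integral_congr_ae hae,
    integral_add (hg.indicator hEm) ((hg.const_mul _).indicator hEm.compl),
    integral_indicator hEm, integral_indicator hEm.compl, integral_const_mul]

/-- with the circle abstracted as a probability space `(Ω, μ)` and
`Hinf` an abstract `H^∞` containing, for every measurable `τ ⊂ Ω` and `a, b > 0`,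
a function with modulus `a` a.e. on `τ` and `b` a.e. off `τ`: if `f ∈ L²`,
`ψ ∈ L²` is nonnegative and `∫ |φ|²|f|² dm ≤ M² ∫ |φ|²ψ² dm` for every
`φ ∈ Hinf`, then `|f| ≤ M ψ` a.e. -/
theorem stmt_8 {Ω : Type*} [MeasurableSpace Ω] (μ : Measure Ω) [IsProbabilityMeasure μ]
    (Hinf : Set (Ω → ℂ))
    (hmod : ∀ τ : Set Ω, MeasurableSet τ → ∀ a b : ℝ, 0 < a → 0 < b →
      ∃ φ ∈ Hinf, (∀ᵐ ζ ∂μ, ζ ∈ τ → ‖φ ζ‖ = a) ∧ (∀ᵐ ζ ∂μ, ζ ∉ τ → ‖φ ζ‖ = b))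
    (f : Ω → ℂ) (ψ : Ω → ℝ) (hψ0 : ∀ ζ, 0 ≤ ψ ζ)
    (hfm : Measurable f) (hψm : Measurable ψ)
    (hf2 : MemLp f 2 μ) (hψ2 : MemLp ψ 2 μ)
    (M : ℝ) (hM : 0 < M)
    (hineq : ∀ φ ∈ Hinf,
      ∫ ζ, ‖φ ζ‖ ^ 2 * ‖f ζ‖ ^ 2 ∂μ ≤ M ^ 2 * ∫ ζ, ‖φ ζ‖ ^ 2 * (ψ ζ) ^ 2 ∂μ) :
    ∀ᵐ ζ ∂μ, ‖f ζ‖ ≤ M * ψ ζ := by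
  -- Integrability of `‖f‖²` and `ψ²`.
  have hg : Integrable (fun ζ => ‖f ζ‖ ^ 2) μ := by
    have := hf2.integrable_norm_rpow two_ne_zero ENNReal.ofNat_ne_top
    simpa [Real.rpow_natCast] using this.congr (by
      filter_upwards with ζ
      rw [ENNReal.toReal_ofNat, Real.rpow_two])
  have hh : Integrable (fun ζ => (ψ ζ) ^ 2) μ := by
    have := hψ2.integrable_norm_rpow two_ne_zero ENNReal.ofNat_ne_top
    exact this.congr (by
      filter_upwards with ζ
      rw [ENNReal.toReal_ofNat, Real.rpow_two, Real.norm_eq_abs, sq_abs])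
  -- Key step: for every ε > 0 the set where `‖f‖ ≥ Mψ + ε` is null.
  have key : ∀ ε : ℝ, 0 < ε → μ {ζ | M * ψ ζ + ε ≤ ‖f ζ‖} = 0 := by
    intro ε hε
    set E := {ζ | M * ψ ζ + ε ≤ ‖f ζ‖} with hEdef
    have hEm : MeasurableSet E :=
      measurableSet_le (by fun_prop) hfm.norm
    set I1 := ∫ ζ in E, ‖f ζ‖ ^ 2 ∂μ with hI1
    set I2 := ∫ ζ in E, (ψ ζ) ^ 2 ∂μ with hI2
    set J1 := ∫ ζ in Eᶜ, ‖f ζ‖ ^ 2 ∂μ with hJ1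
    set J2 := ∫ ζ in Eᶜ, (ψ ζ) ^ 2 ∂μ with hJ2
    have hJ1nn : 0 ≤ J1 := setIntegral_nonneg hEm.compl (fun ζ _ => sq_nonneg _)
    have hJ2nn : 0 ≤ J2 := setIntegral_nonneg hEm.compl (fun ζ _ => sq_nonneg _)
    -- For every b > 0: I1 ≤ M² I2 + b² M² J2.
    have step : ∀ b : ℝ, 0 < b → I1 ≤ M ^ 2 * I2 + b ^ 2 * (M ^ 2 * J2) := by
      intro b hb
      obtain ⟨φ, hφH, hφ1, hφ2⟩ := hmod E hEm 1 b one_pos hb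
      have e1 := split_integral_aux μ E hEm b φ hφ1 hφ2 _ hg
      have e2 := split_integral_aux μ E hEm b φ hφ1 hφ2 _ hh
      have := hineq φ hφH
      rw [e1, e2] at this
      have hb1 : 0 ≤ b ^ 2 * J1 := mul_nonneg (sq_nonneg _) hJ1nn
      nlinarith [this]
    -- Hence I1 ≤ M² I2.
    have main : I1 ≤ M ^ 2 * I2 := by
      by_contra hcon
      push_neg at hcon
      set δ := I1 - M ^ 2 * I2 with hδ
      have hδpos : 0 < δ := by simp [hδ]; linarith
      set C := M ^ 2 * J2 with hC
      have hCnn : 0 ≤ C := mul_nonneg (sq_nonneg _) hJ2nn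
      set b := Real.sqrt (δ / (2 * (C + 1))) with hb
      have hbpos : 0 < b := Real.sqrt_pos.2 (by positivity)
      have hbsq : b ^ 2 = δ / (2 * (C + 1)) := Real.sq_sqrt (by positivity)
      have := step b hbpos
      rw [hbsq] at this
      have hlt : δ / (2 * (C + 1)) * C < δ := by
        rw [div_mul_eq_mul_div, div_lt_iff₀ (by positivity)]
        nlinarith
      linarith
    -- Lower bound: on E, ‖f‖² ≥ M²ψ² + ε².
    have lower : M ^ 2 * I2 + ε ^ 2 * (μ E).toReal ≤ I1 := by
      have hmono : ∫ ζ in E, (M ^ 2 * (ψ ζ) ^ 2 + ε ^ 2) ∂μ ≤ I1 := by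
        apply setIntegral_mono_on ((hh.const_mul _).add (integrable_const _)).integrableOn
          hg.integrableOn hEm
        intro ζ hζ
        have h1 : M * ψ ζ + ε ≤ ‖f ζ‖ := hζ
        have h2 : 0 ≤ M * ψ ζ := mul_nonneg hM.le (hψ0 ζ)
        show M ^ 2 * ψ ζ ^ 2 + ε ^ 2 ≤ ‖f ζ‖ ^ 2
        nlinarith [norm_nonneg (f ζ)]
      rw [integral_add (hh.const_mul _).integrableOn (integrable_const _).integrableOn,
        integral_const_mul, setIntegral_const, smul_eq_mul, mul_comm (μ.real E)] at hmono
      exact hmono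
    have hμfin : μ E ≠ ⊤ := measure_ne_top μ E
    have : ε ^ 2 * (μ E).toReal ≤ 0 := by linarith
    have htR : (μ E).toReal = 0 := le_antisymm
      (by nlinarith [pow_pos hε 2, ENNReal.toReal_nonneg (a := μ E)]) ENNReal.toReal_nonneg
    exact (ENNReal.toReal_eq_zero_iff _).1 htR |>.resolve_right hμfin
  -- Conclude a.e.
  have hae : ∀ᵐ ζ ∂μ, ∀ n : ℕ, ¬ (M * ψ ζ + 1 / (n + 1) ≤ ‖f ζ‖) := by
    rw [ae_all_iff]
    intro n
    have := key (1 / (n + 1)) (by positivity)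
    rw [ae_iff]
    simpa using this
  filter_upwards [hae] with ζ hζ
  by_contra hcon
  push_neg at hcon
  obtain ⟨n, hn⟩ := exists_nat_one_div_lt (sub_pos.2 hcon)
  exact hζ n (by linarith)
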